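/- Let Q be a finite nonempty set of vectors in ℝ^N (linear queries), σ : Q → Q' a bijection onto a set Q' of vectors in ℝ^N, and write q' = σ(q). Let α ∈ (0,1), β ∈ (0,1), c > 0, and assume m := ln|Q|/α² is a positive integer. Let R = { y ∈ ℕ^N : ‖y‖₁ = m } and let x ∈ ℕ^N with ‖x‖₁ = n. Assume there exists y₀ ∈ R with c · max_{q'∈Q'} |⟨q',x⟩ − ⟨q',y₀⟩| ≤ αn. Let Y be the output of the small database mechanism, i.e., the exponential mechanism M_{Exp,c}(x,u') over R with score u'(x,y) = −c · max_{q'∈Q'} |⟨q',x⟩ − ⟨q',y⟩|. Then with probability at least 1−β, max_{q∈Q} |⟨q,x⟩ − c⟨q',Y⟩| ≤ n · max_{q∈Q} ‖q − c·q'‖_∞ + αn + 2c( (ln N · ln|Q|)/α² + ln(1/β) ). -/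

import Mathlib

open MeasureTheory Finset

/-- Two histograms `x, x'` over a universe of size `N` are `(i,j)`-neighbors:
`‖x − x'‖₁ ≤ 2`, `xᵢ ≠ x'ᵢ` and `xⱼ ≠ x'ⱼ`. -/
def Neighbors {N : ℕ} (i j : Fin N) (x x' : Fin N → ℕ) : Prop :=
  (∑ l, |(x l : ℤ) - (x' l : ℤ)|) ≤ 2 ∧ x i ≠ x' i ∧ x j ≠ x' j

/-- `dX` is a privacy budget: nonnegative, symmetric, zero on the diagonal,
satisfying the triangle inequality. -/
def PrivacyBudget {N : ℕ} (dX : Fin N → Fin N → ℝ) : Prop :=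
  (∀ i j, 0 ≤ dX i j) ∧ (∀ i j, dX i j = dX j i) ∧ (∀ i, dX i i = 0) ∧
    (∀ i j k, dX i j ≤ dX i k + dX k j)

/-- A mechanism `M` (a map from histograms to probability measures on `Y`) is `dX`-private. -/
def DXPrivate {N : ℕ} {Y : Type*} [MeasurableSpace Y]
    (dX : Fin N → Fin N → ℝ) (M : (Fin N → ℕ) → Measure Y) : Prop :=
  ∀ i j : Fin N, i ≠ j → ∀ x x' : Fin N → ℕ, Neighbors i j x x' →
    ∀ S : Set Y, MeasurableSet S →
      M x S ≤ ENNReal.ofReal (Real.exp (dX i j)) * M x' S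

lemma multiset_card_finsum {ι β : Type*} (s : Finset ι) (f : ι → Multiset β) :
    Multiset.card (∑ l ∈ s, f l) = ∑ l ∈ s, Multiset.card (f l) := by
  classical
  induction s using Finset.induction_on with
  | empty => simp
  | insert _ _ h ih => simp [Finset.sum_insert h, ih]

lemma card_hist_le {N m : ℕ} (hN : 0 < N) (R : Finset (Fin N → ℕ))
    (hR : ∀ y ∈ R, ∑ l, y l = m) : R.card ≤ N ^ m := by
  classical
  haveI : Inhabited (Fin N) := ⟨⟨0, hN⟩⟩
  have hcount : ∀ (y : Fin N → ℕ) (i : Fin N),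
      Multiset.count i (∑ l, Multiset.replicate (y l) l) = y i := by
    intro y i
    rw [Multiset.count_sum']
    simp [Multiset.count_replicate]
  have hcard : ∀ y ∈ R, Multiset.card (∑ l, Multiset.replicate (y l) l) = m := by
    intro y hy
    rw [multiset_card_finsum]
    simpa using hR y hy
  have h : R.card ≤ Fintype.card (List.Vector (Fin N) m) := by
    set f : (Fin N → ℕ) → List.Vector (Fin N) m := fun y =>
      if h : y ∈ R then
        ⟨(∑ l, Multiset.replicate (y l) l).toList, by
          rw [Multiset.length_toList]; exact hcard y h⟩
      else List.Vector.replicate m default with hf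
    apply Finset.card_le_card_of_injOn f
    · intro y hy; exact Finset.mem_univ _
    · intro y hy z hz hyz
      simp only [Finset.mem_coe] at hy hz
      simp only [hf, dif_pos hy, dif_pos hz] at hyz
      have h2 : ((∑ l, Multiset.replicate (y l) l).toList : List (Fin N))
          = (∑ l, Multiset.replicate (z l) l).toList := by
            have := congrArg Subtype.val hyz; simpa [Finset.mem_coe.mp hy, Finset.mem_coe.mp hz] using this
      have : (∑ l, Multiset.replicate (y l) l) = (∑ l, Multiset.replicate (z l) l) := by
        rw [← Multiset.coe_toList (∑ l, Multiset.replicate (y l) l), h2, Multiset.coe_toList]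
      funext i
      rw [← hcount y i, ← hcount z i, this]
  simpa [card_vector] using h

/-- Utility of the small database mechanism (Proposition 4.4): letting `Y` be the output
of `SmallDB(x, Q', c, α)`, with probability at least `1 − β`,
`max_{q∈Q} |⟨q,x⟩ − c⟨q',Y⟩| ≤ n·max_{q∈Q} ‖q − c·q'‖∞ + αn + 2c((ln N · ln|Q|)/α² + ln(1/β))`.
The probability of the bad event is expressed via the exponential-mechanism weights. -/
theorem stmt_11 {N : ℕ} (hN : 0 < N) (Q : Finset (Fin N → ℝ)) (hQ : Q.Nonempty)
    (σ : (Fin N → ℝ) → (Fin N → ℝ)) (hσ : Set.InjOn σ Q)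
    (α β : ℝ) (hα : α ∈ Set.Ioo (0 : ℝ) 1) (hβ : β ∈ Set.Ioo (0 : ℝ) 1)
    (c : ℝ) (hc : 0 < c)
    (m : ℕ) (hm : 0 < m) (hmval : (m : ℝ) = Real.log (Q.card : ℝ) / α ^ 2)
    (R : Finset (Fin N → ℕ)) (hRmem : ∀ y : Fin N → ℕ, y ∈ R ↔ ∑ l, y l = m)
    (x : Fin N → ℕ) (n : ℕ) (hn : ∑ l, x l = n)
    (u' : (Fin N → ℕ) → ℝ)
    (hu' : ∀ y : Fin N → ℕ, u' y =
      -c * Q.sup' hQ (fun q => |(∑ l, σ q l * (x l : ℝ)) - ∑ l, σ q l * (y l : ℝ)|))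
    (y₀ : Fin N → ℕ) (hy₀ : y₀ ∈ R)
    (hy₀close : c * Q.sup' hQ
        (fun q => |(∑ l, σ q l * (x l : ℝ)) - ∑ l, σ q l * (y₀ l : ℝ)|) ≤ α * n) :
    (∑ y ∈ R.filter (fun y =>
        Q.sup' hQ (fun q => |(∑ l, q l * (x l : ℝ)) - c * ∑ l, σ q l * (y l : ℝ)|) >
          (n : ℝ) * Q.sup' hQ (fun q => ‖q - c • σ q‖) + α * n
            + 2 * c * ((Real.log (N : ℝ) * Real.log (Q.card : ℝ)) / α ^ 2
                + Real.log (1 / β))),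
      Real.exp (u' y / (2 * c))) / (∑ y ∈ R, Real.exp (u' y / (2 * c))) ≤ β := by
  obtain ⟨hα0, hα1⟩ := hα
  obtain ⟨hβ0, hβ1⟩ := hβ
  have hNpos : (0 : ℝ) < N := by exact_mod_cast hN
  have h2c : (0 : ℝ) < 2 * c := by linarith
  set S := Q.sup' hQ (fun q => ‖q - c • σ q‖) with hS
  set D := Real.log (N : ℝ) * Real.log (Q.card : ℝ) / α ^ 2 + Real.log (1 / β) with hDdef
  -- denominator bounds
  have hden_ge : Real.exp (-(α * n) / (2 * c)) ≤ ∑ y ∈ R, Real.exp (u' y / (2 * c)) := by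
    have h1 : -(α * n) ≤ u' y₀ := by
      rw [hu' y₀]; linarith
    calc Real.exp (-(α * n) / (2 * c)) ≤ Real.exp (u' y₀ / (2 * c)) :=
          Real.exp_le_exp.2 ((div_le_div_iff_of_pos_right h2c).2 h1)
      _ ≤ ∑ y ∈ R, Real.exp (u' y / (2 * c)) :=
          Finset.single_le_sum (f := fun y => Real.exp (u' y / (2 * c)))
            (fun y _ => (Real.exp_pos _).le) hy₀
  have hden_pos : 0 < ∑ y ∈ R, Real.exp (u' y / (2 * c)) :=
    lt_of_lt_of_le (Real.exp_pos _) hden_ge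
  -- pointwise bound on the utility
  have hsup : ∀ y : Fin N → ℕ,
      Q.sup' hQ (fun q => |(∑ l, q l * (x l : ℝ)) - c * ∑ l, σ q l * (y l : ℝ)|)
        ≤ (n : ℝ) * S - u' y := by
    intro y
    apply Finset.sup'_le
    intro q hq
    have hA : |∑ l, (q l - c * σ q l) * (x l : ℝ)| ≤ (n : ℝ) * S := by
      calc |∑ l, (q l - c * σ q l) * (x l : ℝ)|
          ≤ ∑ l, |(q l - c * σ q l) * (x l : ℝ)| := Finset.abs_sum_le_sum_abs _ _
        _ ≤ ∑ l, S * (x l : ℝ) := by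
            refine Finset.sum_le_sum fun l _ => ?_
            rw [abs_mul, Nat.abs_cast]
            refine mul_le_mul_of_nonneg_right ?_ (Nat.cast_nonneg _)
            calc |q l - c * σ q l| = ‖(q - c • σ q) l‖ := by
                  simp [Real.norm_eq_abs]
              _ ≤ ‖q - c • σ q‖ := norm_le_pi_norm _ l
              _ ≤ S := Finset.le_sup' (fun q => ‖q - c • σ q‖) hq
        _ = S * n := by rw [← Finset.mul_sum, ← Nat.cast_sum, hn]
        _ = (n : ℝ) * S := mul_comm _ _
    have hBq : c * |(∑ l, σ q l * (x l : ℝ)) - ∑ l, σ q l * (y l : ℝ)| ≤ -u' y := by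
      rw [hu' y, neg_mul, neg_neg]
      exact mul_le_mul_of_nonneg_left
        (Finset.le_sup' (fun q => |(∑ l, σ q l * (x l : ℝ)) - ∑ l, σ q l * (y l : ℝ)|) hq) hc.le
    have hsplit : (∑ l, q l * (x l : ℝ)) - c * ∑ l, σ q l * (y l : ℝ)
        = (∑ l, (q l - c * σ q l) * (x l : ℝ))
          + c * ((∑ l, σ q l * (x l : ℝ)) - ∑ l, σ q l * (y l : ℝ)) := by
      have e1 : ∑ l, (q l - c * σ q l) * (x l : ℝ)
          = (∑ l, q l * (x l : ℝ)) - c * ∑ l, σ q l * (x l : ℝ) := by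
        rw [Finset.mul_sum, ← Finset.sum_sub_distrib]
        exact Finset.sum_congr rfl fun l _ => by ring
      rw [e1]; ring
    calc |(∑ l, q l * (x l : ℝ)) - c * ∑ l, σ q l * (y l : ℝ)|
        = |(∑ l, (q l - c * σ q l) * (x l : ℝ))
            + c * ((∑ l, σ q l * (x l : ℝ)) - ∑ l, σ q l * (y l : ℝ))| := by rw [hsplit]
      _ ≤ |∑ l, (q l - c * σ q l) * (x l : ℝ)|
            + |c * ((∑ l, σ q l * (x l : ℝ)) - ∑ l, σ q l * (y l : ℝ))| := abs_add_le _ _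
      _ = |∑ l, (q l - c * σ q l) * (x l : ℝ)|
            + c * |(∑ l, σ q l * (x l : ℝ)) - ∑ l, σ q l * (y l : ℝ)| := by
          rw [abs_mul, abs_of_pos hc]
      _ ≤ (n : ℝ) * S + -u' y := add_le_add hA hBq
      _ = (n : ℝ) * S - u' y := by ring
  -- bound each term of the numerator
  set B := R.filter (fun y =>
      Q.sup' hQ (fun q => |(∑ l, q l * (x l : ℝ)) - c * ∑ l, σ q l * (y l : ℝ)|) >
        (n : ℝ) * S + α * n + 2 * c * D) with hBdef
  have hBsub : B ⊆ R := by rw [hBdef]; exact Finset.filter_subset _ _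
  have hbad : ∀ y ∈ R.filter (fun y =>
      Q.sup' hQ (fun q => |(∑ l, q l * (x l : ℝ)) - c * ∑ l, σ q l * (y l : ℝ)|) >
        (n : ℝ) * S + α * n + 2 * c * D),
      Real.exp (u' y / (2 * c)) ≤ Real.exp (-(α * n) / (2 * c) - D) := by
    intro y hy
    rw [Finset.mem_filter] at hy
    have h1 := hy.2
    have h2 := hsup y
    have hu : u' y ≤ -(α * n) - 2 * c * D := by linarith
    have heq : -(α * n) / (2 * c) - D = (-(α * n) - 2 * c * D) / (2 * c) := by
      field_simp
    refine Real.exp_le_exp.2 ?_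
    rw [heq]
    exact (div_le_div_iff_of_pos_right h2c).2 hu
  -- numerator bound
  have hcardR : R.card ≤ N ^ m := card_hist_le hN R (fun y hy => (hRmem y).1 hy)
  have hnum : ∑ y ∈ B,
      Real.exp (u' y / (2 * c)) ≤ (N : ℝ) ^ m * Real.exp (-(α * n) / (2 * c) - D) := by
    calc ∑ y ∈ B, Real.exp (u' y / (2 * c))
        ≤ B.card • Real.exp (-(α * n) / (2 * c) - D) :=
          Finset.sum_le_card_nsmul _ _ _ hbad
      _ = (B.card : ℝ) * Real.exp (-(α * n) / (2 * c) - D) := nsmul_eq_mul _ _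
      _ ≤ (N : ℝ) ^ m * Real.exp (-(α * n) / (2 * c) - D) := by
          refine mul_le_mul_of_nonneg_right ?_ (Real.exp_pos _).le
          have h4 : B.card ≤ N ^ m := le_trans (Finset.card_le_card hBsub) hcardR
          exact_mod_cast h4
  -- key equality
  have hexpD : Real.exp D = (N : ℝ) ^ m * (1 / β) := by
    rw [hDdef, Real.exp_add]
    congr 1
    · have h3 : Real.log (N : ℝ) * Real.log (Q.card : ℝ) / α ^ 2
          = (m : ℝ) * Real.log (N : ℝ) := by
        rw [hmval]; ring
      rw [h3, Real.exp_nat_mul, Real.exp_log hNpos]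
    · exact Real.exp_log (by positivity)
  have hkey : (N : ℝ) ^ m * Real.exp (-(α * n) / (2 * c) - D)
      = β * Real.exp (-(α * n) / (2 * c)) := by
    rw [Real.exp_sub, hexpD]
    have hNm : (0 : ℝ) < (N : ℝ) ^ m := by positivity
    field_simp
  rw [div_le_iff₀ hden_pos]
  calc _ ≤ (N : ℝ) ^ m * Real.exp (-(α * n) / (2 * c) - D) := hnum
    _ = β * Real.exp (-(α * n) / (2 * c)) := hkey
    _ ≤ β * ∑ y ∈ R, Real.exp (u' y / (2 * c)) :=
        mul_le_mul_of_nonneg_left hden_ge hβ0.le
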